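/- In the noise-free setting under Assumption 1, let A ⊊ A† with B = A†∖A, let d ∈ ℝ^p have |d_i| = λ for all i ∈ A, let x_A = (Ψ_AᵗΨ_A)⁻¹(Ψ_Aᵗ y − d_A), define d_i = Ψ_iᵗ(y − Ψ_A x_A) for i ∉ A, and let i_A be an index maximizing |x†_i| over i ∈ A^c (so i_A ∈ B). Then |d_{i_A}| ≥ ¾|x†_{i_A}| − ¼λ. -/

import Mathlib

open Matrix

/-- The submatrix `Ψ_A` of `Ψ` consisting of the columns indexed by `A`. -/
def colSub {n p : ℕ} (Ψ : Matrix (Fin n) (Fin p) ℝ) (A : Finset (Fin p)) :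
    Matrix (Fin n) {i // i ∈ A} ℝ :=
  Matrix.of fun i j => Ψ i j.1

/-- `Ψ` satisfies the restricted isometry property of order `k` with constant `δ`:
`(1 − δ)‖x‖₂² ≤ ‖Ψx‖₂² ≤ (1 + δ)‖x‖₂²` for all `x` with at most `k` nonzero entries. -/
def HasRIP {n p : ℕ} (Ψ : Matrix (Fin n) (Fin p) ℝ) (k : ℕ) (δ : ℝ) : Prop :=
  ∀ x : Fin p → ℝ, (Finset.univ.filter (fun i => x i ≠ 0)).card ≤ k →
    (1 - δ) * (∑ i, x i ^ 2) ≤ ∑ j, (Ψ *ᵥ x) j ^ 2 ∧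
      ∑ j, (Ψ *ᵥ x) j ^ 2 ≤ (1 + δ) * (∑ i, x i ^ 2)

lemma colSub_mulVec {n p : ℕ} (Ψ : Matrix (Fin n) (Fin p) ℝ) (A : Finset (Fin p))
    (v : {i // i ∈ A} → ℝ) :
    colSub Ψ A *ᵥ v = Ψ *ᵥ (fun i => if h : i ∈ A then v ⟨i, h⟩ else 0) := by
  funext j
  simp only [mulVec, dotProduct, colSub, Matrix.of_apply]
  have e1 : ∑ x : Fin p, Ψ j x * (if h : x ∈ A then v ⟨x, h⟩ else 0)
      = ∑ x ∈ A, Ψ j x * (if h : x ∈ A then v ⟨x, h⟩ else 0) :=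
    (Finset.sum_subset A.subset_univ (fun x _ hx => by rw [dif_neg hx, mul_zero])).symm
  rw [e1, ← Finset.sum_attach A, Finset.univ_eq_attach]
  exact Finset.sum_congr rfl fun x _ => by rw [dif_pos x.2]

lemma pol_sub {α : Type*} [Fintype α] (f g : α → ℝ) (c : ℝ) (hc : c ≠ 0) :
    (∑ x, (c * f x + c⁻¹ * g x) ^ 2) - (∑ x, (c * f x - c⁻¹ * g x) ^ 2)
      = 4 * ∑ x, f x * g x := by
  rw [← Finset.sum_sub_distrib, Finset.mul_sum]
  exact Finset.sum_congr rfl fun x _ => by field_simp; ring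

lemma pol_add {α : Type*} [Fintype α] (f g : α → ℝ) (c : ℝ) :
    (∑ x, (c * f x + c⁻¹ * g x) ^ 2) + (∑ x, (c * f x - c⁻¹ * g x) ^ 2)
      = 2 * c ^ 2 * ∑ x, f x ^ 2 + 2 * c⁻¹ ^ 2 * ∑ x, g x ^ 2 := by
  rw [Finset.mul_sum, Finset.mul_sum, ← Finset.sum_add_distrib, ← Finset.sum_add_distrib]
  exact Finset.sum_congr rfl fun x _ => by ring

set_option maxHeartbeats 1600000 in
lemma rip_inner {n p k : ℕ} {Ψ : Matrix (Fin n) (Fin p) ℝ} {δ : ℝ}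
    (hRIP : HasRIP Ψ k δ) (S : Finset (Fin p)) (hS : S.card ≤ k)
    (u v : Fin p → ℝ) (hu : ∀ i ∉ S, u i = 0) (hv : ∀ i ∉ S, v i = 0) :
    |(∑ j, (Ψ *ᵥ u) j * (Ψ *ᵥ v) j) - ∑ i, u i * v i|
      ≤ δ * Real.sqrt (∑ i, u i ^ 2) * Real.sqrt (∑ i, v i ^ 2) := by
  have key : ∀ w : Fin p → ℝ, (∀ i ∉ S, w i = 0) →
      |(∑ j, (Ψ *ᵥ w) j ^ 2) - ∑ i, w i ^ 2| ≤ δ * ∑ i, w i ^ 2 := by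
    intro w hw
    have hcard : (Finset.univ.filter fun i => w i ≠ 0).card ≤ k := by
      refine le_trans (Finset.card_le_card fun i hi => ?_) hS
      simp only [Finset.mem_filter] at hi
      by_contra hiS
      exact hi.2 (hw i hiS)
    obtain ⟨h1, h2⟩ := hRIP w hcard
    rw [abs_le]
    constructor <;> nlinarith
  have hUnn : (0:ℝ) ≤ ∑ i, u i ^ 2 := Finset.sum_nonneg fun i _ => sq_nonneg _
  have hVnn : (0:ℝ) ≤ ∑ i, v i ^ 2 := Finset.sum_nonneg fun i _ => sq_nonneg _
  by_cases hu0 : ∑ i, u i ^ 2 = 0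
  · have hz : ∀ i, u i = 0 := by
      intro i
      have := (Finset.sum_eq_zero_iff_of_nonneg (fun i _ => sq_nonneg (u i))).1 hu0 i
        (Finset.mem_univ i)
      nlinarith [this]
    have : u = 0 := funext hz
    subst this
    simp [mulVec]
  by_cases hv0 : ∑ i, v i ^ 2 = 0
  · have hz : ∀ i, v i = 0 := by
      intro i
      have := (Finset.sum_eq_zero_iff_of_nonneg (fun i _ => sq_nonneg (v i))).1 hv0 i
        (Finset.mem_univ i)
      nlinarith [this]
    have : v = 0 := funext hz
    subst this
    simp [mulVec]
  have hU : (0:ℝ) < ∑ i, u i ^ 2 := lt_of_le_of_ne hUnn (Ne.symm hu0)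
  have hV : (0:ℝ) < ∑ i, v i ^ 2 := lt_of_le_of_ne hVnn (Ne.symm hv0)
  set U := ∑ i, u i ^ 2 with hUdef
  set V := ∑ i, v i ^ 2 with hVdef
  have hsU : 0 < Real.sqrt U := Real.sqrt_pos.2 hU
  have hsV : 0 < Real.sqrt V := Real.sqrt_pos.2 hV
  set c : ℝ := Real.sqrt (Real.sqrt V / Real.sqrt U) with hcdef
  have hc : 0 < c := Real.sqrt_pos.2 (div_pos hsV hsU)
  have hc2 : c ^ 2 = Real.sqrt V / Real.sqrt U := Real.sq_sqrt (le_of_lt (div_pos hsV hsU))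
  have hUU : U = Real.sqrt U * Real.sqrt U := (Real.mul_self_sqrt (le_of_lt hU)).symm
  have hVV : V = Real.sqrt V * Real.sqrt V := (Real.mul_self_sqrt (le_of_lt hV)).symm
  have hc2U : c ^ 2 * U = Real.sqrt U * Real.sqrt V := by
    rw [hc2]; field_simp; linear_combination hUU
  have hci2V : c⁻¹ ^ 2 * V = Real.sqrt U * Real.sqrt V := by
    rw [inv_pow, hc2]; field_simp; linear_combination hVV
  have mlP : Ψ *ᵥ (fun i => c * u i + c⁻¹ * v i)
      = fun j => c * (Ψ *ᵥ u) j + c⁻¹ * (Ψ *ᵥ v) j := by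
    have : (fun i => c * u i + c⁻¹ * v i) = c • u + c⁻¹ • v := by
      funext i; simp [smul_eq_mul]
    rw [this, mulVec_add, mulVec_smul, mulVec_smul]
    funext j; simp [smul_eq_mul]
  have mlM : Ψ *ᵥ (fun i => c * u i - c⁻¹ * v i)
      = fun j => c * (Ψ *ᵥ u) j - c⁻¹ * (Ψ *ᵥ v) j := by
    have : (fun i => c * u i - c⁻¹ * v i) = c • u - c⁻¹ • v := by
      funext i; simp [smul_eq_mul]
    rw [this, mulVec_sub, mulVec_smul, mulVec_smul]
    funext j; simp [smul_eq_mul]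
  have kP := key (fun i => c * u i + c⁻¹ * v i)
    (fun i hi => by simp only [hu i hi, hv i hi]; ring)
  have kM := key (fun i => c * u i - c⁻¹ * v i)
    (fun i hi => by simp only [hu i hi, hv i hi]; ring)
  rw [mlP] at kP
  rw [mlM] at kM
  beta_reduce at kP kM
  set NP := ∑ i, (c * u i + c⁻¹ * v i) ^ 2 with hNP
  set NM := ∑ i, (c * u i - c⁻¹ * v i) ^ 2 with hNM
  set QP := ∑ j, (c * (Ψ *ᵥ u) j + c⁻¹ * (Ψ *ᵥ v) j) ^ 2 with hQP
  set QM := ∑ j, (c * (Ψ *ᵥ u) j - c⁻¹ * (Ψ *ᵥ v) j) ^ 2 with hQM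
  have PS : NP - NM = 4 * ∑ i, u i * v i := pol_sub u v c (ne_of_gt hc)
  have PS' : QP - QM = 4 * ∑ j, (Ψ *ᵥ u) j * (Ψ *ᵥ v) j :=
    pol_sub (fun j => (Ψ *ᵥ u) j) (fun j => (Ψ *ᵥ v) j) c (ne_of_gt hc)
  have PA : NP + NM = 2 * c ^ 2 * U + 2 * c⁻¹ ^ 2 * V := pol_add u v c
  have hsum : NP + NM = 4 * (Real.sqrt U * Real.sqrt V) := by
    rw [PA]; nlinarith [hc2U, hci2V]
  have hNN : δ * NP + δ * NM = δ * (4 * (Real.sqrt U * Real.sqrt V)) := by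
    rw [← mul_add, hsum]
  rw [abs_le] at kP kM ⊢
  constructor <;> linarith [kP.1, kP.2, kM.1, kM.2, hNN, PS, PS']

set_option maxHeartbeats 3200000 in
/-- under Assumption 1, `|d_{i_A}| ≥ ¾|x†_{i_A}| − ¼λ`. -/
theorem stmt_12 {n p : ℕ} (Ψ : Matrix (Fin n) (Fin p) ℝ)
    (xdag : Fin p → ℝ) (Adag : Finset (Fin p))
    (hAdag : Adag = Finset.univ.filter (fun i => xdag i ≠ 0))
    (T : ℕ) (hT : T = Adag.card)
    (y : Fin n → ℝ) (hy : y = Ψ *ᵥ xdag)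
    (δ : ℝ) (hδ0 : 0 < δ) (hδ1 : δ < 1)
    (hRIP : HasRIP Ψ (T + 1) δ)
    (hAss1 : δ ≤ 1 / (4 * Real.sqrt T + 1))
    (lam : ℝ) (hlam : 0 < lam)
    (A : Finset (Fin p)) (hA : A ⊂ Adag)
    (B : Finset (Fin p)) (hB : B = Adag \ A)
    (d : Fin p → ℝ) (hdA : ∀ i ∈ A, |d i| = lam)
    (xA : {i // i ∈ A} → ℝ)
    (hxA : xA = ((colSub Ψ A)ᵀ * colSub Ψ A)⁻¹ *ᵥ ((colSub Ψ A)ᵀ *ᵥ y - fun j => d j.1))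
    (hdI : ∀ i ∉ A, d i = (Ψᵀ *ᵥ (y - colSub Ψ A *ᵥ xA)) i)
    (iA : Fin p) (hiA : iA ∉ A) (hmax : ∀ j ∉ A, |xdag j| ≤ |xdag iA|) :
    3 / 4 * |xdag iA| - 1 / 4 * lam ≤ |d iA| := by
  have hAsub : A ⊆ Adag := hA.subset
  have hAcard : A.card ≤ T := hT ▸ Finset.card_le_card hAsub
  -- extension of xA by zero, error vector h
  set xAe : Fin p → ℝ := fun i => if h : i ∈ A then xA ⟨i, h⟩ else 0 with hxAe
  set h : Fin p → ℝ := fun i => xdag i - xAe i with hh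
  -- Ψ h = residual r
  have hΨh : Ψ *ᵥ h = y - colSub Ψ A *ᵥ xA := by
    rw [colSub_mulVec, hy]
    have : h = xdag - xAe := rfl
    rw [this, mulVec_sub]
  -- support of h within Adag
  have hsupp : ∀ i ∉ Adag, h i = 0 := by
    intro i hi
    have hiA' : i ∉ A := fun hc => hi (hAsub hc)
    have hx0 : xdag i = 0 := by
      by_contra hne
      exact hi (hAdag ▸ Finset.mem_filter.2 ⟨Finset.mem_univ i, hne⟩)
    simp only [hh, hxAe, dif_neg hiA', hx0, sub_zero]
  -- invertibility of the Gram matrix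
  set M := (colSub Ψ A)ᵀ * colSub Ψ A with hM
  have hdet : IsUnit M.det := by
    rw [isUnit_iff_ne_zero]
    intro hd0
    obtain ⟨v, hv0, hMv⟩ := (Matrix.exists_mulVec_eq_zero_iff).2 hd0
    set ve : Fin p → ℝ := fun i => if h : i ∈ A then v ⟨i, h⟩ else 0 with hve
    have hΨve : Ψ *ᵥ ve = colSub Ψ A *ᵥ v := (colSub_mulVec Ψ A v).symm
    have hq : ∑ j, (Ψ *ᵥ ve) j ^ 2 = 0 := by
      have e1 : ∑ j, (Ψ *ᵥ ve) j ^ 2 = (colSub Ψ A *ᵥ v) ⬝ᵥ (colSub Ψ A *ᵥ v) := by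
        rw [hΨve]; simp [dotProduct, sq]
      have e2 : v ⬝ᵥ (M *ᵥ v) = (colSub Ψ A *ᵥ v) ⬝ᵥ (colSub Ψ A *ᵥ v) := by
        rw [hM, ← mulVec_mulVec, dotProduct_mulVec, vecMul_transpose]
      rw [e1, ← e2, hMv, dotProduct_zero]
    have hcard : (Finset.univ.filter fun i => ve i ≠ 0).card ≤ T + 1 := by
      refine le_trans (le_trans (Finset.card_le_card fun i hi => ?_) hAcard) (Nat.le_succ T)
      simp only [Finset.mem_filter] at hi
      by_contra hiA'
      exact hi.2 (by simp only [hve, dif_neg hiA'])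
    have hrip := (hRIP ve hcard).1
    rw [hq] at hrip
    have hsum : ∑ i, ve i ^ 2 = ∑ x : {i // i ∈ A}, v x ^ 2 := by
      have e1 : ∑ i, ve i ^ 2 = ∑ i ∈ A, ve i ^ 2 :=
        (Finset.sum_subset A.subset_univ (fun x _ hx => by
          simp only [hve, dif_neg hx]; ring)).symm
      rw [e1, Finset.univ_eq_attach, ← Finset.sum_attach A (fun i => ve i ^ 2)]
      exact Finset.sum_congr rfl fun x _ => by simp only [hve, dif_pos x.2]
    have hpos : 0 < ∑ x : {i // i ∈ A}, v x ^ 2 := by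
      have hne : ∃ x, v x ≠ 0 := by
        by_contra hall
        push_neg at hall
        exact hv0 (funext hall)
      obtain ⟨x, hx⟩ := hne
      exact Finset.sum_pos' (fun i _ => sq_nonneg _)
        ⟨x, Finset.mem_univ x, by positivity⟩
    rw [hsum] at hrip
    nlinarith
  -- normal equations
  have hNE : ∀ i ∈ A, (Ψᵀ *ᵥ (Ψ *ᵥ h)) i = d i := by
    intro i hi
    have hMxA : M *ᵥ xA = (colSub Ψ A)ᵀ *ᵥ y - fun j => d j.1 := by
      rw [hxA, mulVec_mulVec, Matrix.mul_nonsing_inv M hdet, Matrix.one_mulVec]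
    have hgram : (colSub Ψ A)ᵀ *ᵥ (colSub Ψ A *ᵥ xA) = M *ᵥ xA := by
      rw [hM, mulVec_mulVec]
    have hcol : ((colSub Ψ A)ᵀ *ᵥ (y - colSub Ψ A *ᵥ xA)) = fun j => d j.1 := by
      rw [mulVec_sub, hgram, hMxA]
      funext j2
      simp
    have : (Ψᵀ *ᵥ (y - colSub Ψ A *ᵥ xA)) i
        = ((colSub Ψ A)ᵀ *ᵥ (y - colSub Ψ A *ᵥ xA)) ⟨i, hi⟩ := by
      simp [mulVec, dotProduct, colSub, transpose]
    rw [hΨh, this, hcol]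
  -- quantities
  set X := |xdag iA| with hX
  have hX0 : 0 ≤ X := abs_nonneg _
  set sT := Real.sqrt T with hsT
  have hsT0 : 0 ≤ sT := Real.sqrt_nonneg _
  set H := Real.sqrt (∑ i, h i ^ 2) with hHdef
  have hH0 : 0 ≤ H := Real.sqrt_nonneg _
  have hHsq : H ^ 2 = ∑ i, h i ^ 2 :=
    Real.sq_sqrt (Finset.sum_nonneg fun i _ => sq_nonneg _)
  set Sa := ∑ i ∈ A, h i ^ 2 with hSa
  set Sb := ∑ i ∈ B, h i ^ 2 with hSb
  have hSa0 : 0 ≤ Sa := Finset.sum_nonneg fun i _ => sq_nonneg _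
  have hSb0 : 0 ≤ Sb := Finset.sum_nonneg fun i _ => sq_nonneg _
  set a := Real.sqrt Sa with ha
  set b := Real.sqrt Sb with hb
  have ha0 : 0 ≤ a := Real.sqrt_nonneg _
  have hb0 : 0 ≤ b := Real.sqrt_nonneg _
  have ha2 : a ^ 2 = Sa := Real.sq_sqrt hSa0
  have hb2 : b ^ 2 = Sb := Real.sq_sqrt hSb0
  -- Application 1 : |d iA - xdag iA| ≤ δ H
  set e : Fin p → ℝ := fun i => if i = iA then (1:ℝ) else 0 with he
  have hcard1 : (insert iA Adag).card ≤ T + 1 :=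
    (Finset.card_insert_le _ _).trans (by omega)
  have heS : ∀ i ∉ insert iA Adag, e i = 0 := by
    intro i hi
    have : i ≠ iA := fun hc => hi (hc ▸ Finset.mem_insert_self _ _)
    simp [he, this]
  have hhS : ∀ i ∉ insert iA Adag, h i = 0 := fun i hi =>
    hsupp i fun hc => hi (Finset.mem_insert_of_mem hc)
  have F3 := rip_inner hRIP (insert iA Adag) hcard1 e h heS hhS
  have he2 : ∑ i, e i ^ 2 = 1 := by
    have : ∀ i, e i ^ 2 = if i = iA then (1:ℝ) else 0 := by
      intro i; by_cases hi : i = iA <;> simp [he, hi]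
    rw [Finset.sum_congr rfl fun i _ => this i, Finset.sum_ite_eq' Finset.univ iA fun _ => (1:ℝ)]
    simp
  have heu : ∑ i, e i * h i = xdag iA := by
    have : ∀ i, e i * h i = if i = iA then h i else 0 := by
      intro i; by_cases hi : i = iA <;> simp [he, hi]
    rw [Finset.sum_congr rfl fun i _ => this i,
      Finset.sum_ite_eq' Finset.univ iA fun i => h i]
    simp only [Finset.mem_univ, if_true, hh, hxAe, dif_neg hiA, sub_zero]
  have heΨ : ∑ j, (Ψ *ᵥ e) j * (Ψ *ᵥ h) j = d iA := by
    have hcol : Ψ *ᵥ e = fun j => Ψ j iA := by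
      funext j
      simp only [mulVec, dotProduct, he, mul_ite, mul_one, mul_zero]
      rw [Finset.sum_ite_eq' Finset.univ iA fun i => Ψ j i]
      simp
    have step : ∑ j, (Ψ *ᵥ e) j * (Ψ *ᵥ h) j = (Ψᵀ *ᵥ (Ψ *ᵥ h)) iA := by
      rw [hcol]; rfl
    rw [step, hΨh, ← hdI iA hiA]
  rw [he2, Real.sqrt_one, mul_one, heu, heΨ] at F3
  have F3' : |d iA - xdag iA| ≤ δ * H := F3
  -- Application 2 : a ≤ sT * lam + δ * H
  set hA2 : Fin p → ℝ := fun i => if i ∈ A then h i else 0 with hhA2def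
  have hcard2 : Adag.card ≤ T + 1 := by omega
  have hhAS : ∀ i ∉ Adag, hA2 i = 0 := by
    intro i hi
    have : i ∉ A := fun hc => hi (hAsub hc)
    simp [hhA2def, this]
  have F5 := rip_inner hRIP Adag hcard2 hA2 h hhAS hsupp
  have hA2sq : ∑ i, hA2 i ^ 2 = Sa := by
    rw [hSa]
    refine (Finset.sum_subset A.subset_univ fun x _ hx => by simp [hhA2def, hx]).symm.trans ?_
    exact Finset.sum_congr rfl fun x hx => by simp [hhA2def, hx]
  have hA2h : ∑ i, hA2 i * h i = Sa := by
    rw [hSa]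
    refine (Finset.sum_subset A.subset_univ fun x _ hx => by simp [hhA2def, hx]).symm.trans ?_
    exact Finset.sum_congr rfl fun x hx => by simp [hhA2def, hx, sq]
  have hΨhA : ∑ j, (Ψ *ᵥ hA2) j * (Ψ *ᵥ h) j = ∑ i ∈ A, h i * d i := by
    have c1 : ∑ j, (Ψ *ᵥ hA2) j * (Ψ *ᵥ h) j = ∑ i, hA2 i * (Ψᵀ *ᵥ (Ψ *ᵥ h)) i := by
      calc ∑ j, (Ψ *ᵥ hA2) j * (Ψ *ᵥ h) j
          = ∑ j, ∑ i, Ψ j i * hA2 i * (Ψ *ᵥ h) j := by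
            refine Finset.sum_congr rfl fun j _ => ?_
            rw [show (Ψ *ᵥ hA2) j = ∑ i, Ψ j i * hA2 i from rfl, Finset.sum_mul]
        _ = ∑ i, ∑ j, Ψ j i * hA2 i * (Ψ *ᵥ h) j := Finset.sum_comm
        _ = ∑ i, hA2 i * (Ψᵀ *ᵥ (Ψ *ᵥ h)) i := by
            refine Finset.sum_congr rfl fun i _ => ?_
            rw [show (Ψᵀ *ᵥ (Ψ *ᵥ h)) i = ∑ j, Ψ j i * (Ψ *ᵥ h) j from rfl, Finset.mul_sum]
            exact Finset.sum_congr rfl fun j _ => by ring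
    rw [c1]
    refine (Finset.sum_subset A.subset_univ fun x _ hx => by simp [hhA2def, hx]).symm.trans ?_
    exact Finset.sum_congr rfl fun x hx => by rw [hNE x hx]; simp [hhA2def, hx]
  rw [hA2sq, hA2h, hΨhA, ← ha] at F5
  -- Cauchy-Schwarz bound
  have hdsq : ∑ i ∈ A, d i ^ 2 = (A.card : ℝ) * lam ^ 2 := by
    rw [Finset.sum_congr rfl fun i hi => ?_, Finset.sum_const, nsmul_eq_mul]
    rw [← sq_abs, hdA i (by assumption)]
  have CS : ∑ i ∈ A, h i * d i ≤ a * (sT * lam) := by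
    have c2 : (∑ i ∈ A, h i * d i) ^ 2 ≤ Sa * ((A.card : ℝ) * lam ^ 2) := by
      rw [← hdsq]; exact Finset.sum_mul_sq_le_sq_mul_sq A _ _
    have c3 : Sa * ((A.card : ℝ) * lam ^ 2) ≤ (a * (sT * lam)) ^ 2 := by
      have hc : (A.card : ℝ) ≤ (T : ℝ) := Nat.cast_le.2 hAcard
      have hst2 : sT ^ 2 = (T : ℝ) := Real.sq_sqrt (Nat.cast_nonneg T)
      have : (a * (sT * lam)) ^ 2 = Sa * ((T : ℝ) * lam ^ 2) := by
        rw [mul_pow, mul_pow, ha2, hst2]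
      rw [this]
      exact mul_le_mul_of_nonneg_left
        (mul_le_mul_of_nonneg_right hc (sq_nonneg lam)) hSa0
    have : (∑ i ∈ A, h i * d i) ^ 2 ≤ (a * (sT * lam)) ^ 2 := le_trans c2 c3
    nlinarith [mul_nonneg ha0 (mul_nonneg hsT0 hlam.le), this]
  have Fa : a ≤ sT * lam + δ * H := by
    have habs := (abs_le.1 F5).1
    have : a ^ 2 ≤ a * (sT * lam) + δ * a * H := by nlinarith [habs, CS, ha2]
    nlinarith [this, ha0, mul_nonneg hsT0 hlam.le, mul_nonneg hδ0.le hH0]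
  -- H ≤ a + b
  have hsplit : ∑ i, h i ^ 2 = Sa + Sb := by
    have e1 : ∑ i, h i ^ 2 = ∑ i ∈ Adag, h i ^ 2 :=
      (Finset.sum_subset Adag.subset_univ fun x _ hx => by rw [hsupp x hx]; ring).symm
    have e2 : A ∪ B = Adag := by rw [hB]; exact Finset.union_sdiff_of_subset hAsub
    have e3 : Disjoint A B := by rw [hB]; exact Finset.disjoint_sdiff
    rw [e1, ← e2, Finset.sum_union e3]
  have F6 : H ≤ a + b := by
    rw [hHdef, hsplit]
    have : Sa + Sb ≤ (a + b) ^ 2 := by nlinarith [mul_nonneg ha0 hb0, ha2, hb2]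
    calc Real.sqrt (Sa + Sb) ≤ Real.sqrt ((a + b) ^ 2) := Real.sqrt_le_sqrt this
      _ = a + b := Real.sqrt_sq (by linarith)
  -- b ≤ sT * X
  have F7 : b ≤ sT * X := by
    have hBsub : B ⊆ Adag := hB ▸ Finset.sdiff_subset
    have hBcard : (B.card : ℝ) ≤ (T : ℝ) := Nat.cast_le.2 (hT ▸ Finset.card_le_card hBsub)
    have hterm : ∀ i ∈ B, h i ^ 2 ≤ X ^ 2 := by
      intro i hi
      have hiA' : i ∉ A := (Finset.mem_sdiff.1 (hB ▸ hi)).2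
      have hhi : h i = xdag i := by simp only [hh, hxAe, dif_neg hiA', sub_zero]
      have := hmax i hiA'
      rw [hhi, ← sq_abs (xdag i), hX]
      nlinarith [this, abs_nonneg (xdag i)]
    have hSbB : Sb ≤ (T : ℝ) * X ^ 2 := by
      calc Sb ≤ ∑ i ∈ B, X ^ 2 := Finset.sum_le_sum hterm
        _ = (B.card : ℝ) * X ^ 2 := by rw [Finset.sum_const, nsmul_eq_mul]
        _ ≤ (T : ℝ) * X ^ 2 := by nlinarith [sq_nonneg X]
    have hst2 : sT ^ 2 = (T : ℝ) := Real.sq_sqrt (Nat.cast_nonneg T)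
    calc b = Real.sqrt Sb := hb
      _ ≤ Real.sqrt ((sT * X) ^ 2) := Real.sqrt_le_sqrt (by rw [mul_pow, hst2]; exact hSbB)
      _ = sT * X := Real.sqrt_sq (mul_nonneg hsT0 hX0)
  -- combine
  have F8 : δ * (4 * sT + 1) ≤ 1 := by
    have hpos : 0 < 4 * sT + 1 := by linarith
    exact (le_div_iff₀ hpos).1 hAss1
  have h1 : (1 - δ) * H ≤ sT * (lam + X) := by nlinarith [Fa, F6, F7]
  have hδH : δ * H ≤ (lam + X) / 4 := by
    have h2 : δ * ((1 - δ) * H) ≤ δ * (sT * (lam + X)) :=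
      mul_le_mul_of_nonneg_left h1 hδ0.le
    have h3 : δ * sT ≤ (1 - δ) / 4 := by linarith [F8]
    have h4 : δ * sT * (lam + X) ≤ ((1 - δ) / 4) * (lam + X) :=
      mul_le_mul_of_nonneg_right h3 (by linarith)
    nlinarith [h2, h4, hδ1]
  have Ffin : |xdag iA| - |d iA| ≤ δ * H :=
    le_trans (le_trans (abs_sub_abs_le_abs_sub _ _) (le_of_eq (abs_sub_comm _ _))) F3'
  linarith [hδH, Ffin]
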